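/- Let V be a finite-dimensional real inner product space, S ⊆ V a nonempty closed convex set, g : V → ℝ a convex function, and let x ∈ S, x* ∈ S, ε > 0, L > 0, and d ∈ ∂g(x) with d ≠ 0 and ‖d‖ ≤ L. If g(x) > ε and g(x*) ≤ 0, then ‖P_S(x − (g(x)/‖d‖²) d) − x*‖² < ‖x − x*‖² − ε²/L². -/

import Mathlib

/-- The subdifferential of `g : V → ℝ` at `x`. -/
def subdiff {V : Type*} [NormedAddCommGroup V] [InnerProductSpace ℝ V]
    (g : V → ℝ) (x : V) : Set V :=
  {d | ∀ y, g x + (inner ℝ d (y - x) : ℝ) ≤ g y}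

theorem stmt3 {V : Type*} [NormedAddCommGroup V] [InnerProductSpace ℝ V]
    [FiniteDimensional ℝ V]
    (S : Set V) (hSne : S.Nonempty) (hScl : IsClosed S) (hScv : Convex ℝ S)
    (g : V → ℝ) (hg : ConvexOn ℝ Set.univ g)
    (x xstar : V) (hx : x ∈ S) (hxstar : xstar ∈ S)
    (ε L : ℝ) (hε : 0 < ε) (hL : 0 < L)
    (d : V) (hd : d ∈ subdiff g x) (hd0 : d ≠ 0) (hdL : ‖d‖ ≤ L)
    (proj : V → V)
    (hproj : ∀ y, proj y ∈ S ∧ ∀ z ∈ S, ‖y - proj y‖ ≤ ‖y - z‖)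
    (hgx : g x > ε) (hgxstar : g xstar ≤ 0) :
    ‖proj (x - (g x / ‖d‖ ^ 2) • d) - xstar‖ ^ 2 < ‖x - xstar‖ ^ 2 - ε ^ 2 / L ^ 2 := by
  haveI : Nonempty S := hSne.to_subtype
  set t : ℝ := g x / ‖d‖ ^ 2 with ht
  set y : V := x - t • d with hy
  set p : V := proj y with hp
  obtain ⟨hpS, hpmin⟩ := hproj y
  have hdn : (0:ℝ) < ‖d‖ := norm_pos_iff.mpr hd0
  have hdsq : (0:ℝ) < ‖d‖ ^ 2 := by positivity
  -- obtuse angle property of the projection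
  have hinf : ‖y - p‖ = ⨅ w : S, ‖y - (w : V)‖ := by
    apply le_antisymm
    · exact le_ciInf fun w => hpmin w w.2
    · have hbb : BddBelow (Set.range fun w : S => ‖y - (w : V)‖) :=
        ⟨0, by rintro r ⟨w, rfl⟩; positivity⟩
      exact ciInf_le hbb ⟨p, hpS⟩
  have hobt := (norm_eq_iInf_iff_real_inner_le_zero hScv hpS).mp hinf
  have h1 : (inner ℝ (y - p) (xstar - p) : ℝ) ≤ 0 := hobt xstar hxstar
  -- expand ‖p - xstar‖²
  have ha : ‖p - xstar‖ ^ 2 = ‖y - xstar‖ ^ 2 - 2 * (inner ℝ (y - xstar) (y - p) : ℝ)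
      + ‖y - p‖ ^ 2 := by
    have h := norm_sub_sq_real (y - xstar) (y - p)
    have e : (y - xstar) - (y - p) = p - xstar := by abel
    rw [e] at h
    linarith [h]
  have hb : (inner ℝ (y - p) (xstar - p) : ℝ)
      = -(inner ℝ (y - xstar) (y - p) : ℝ) + ‖y - p‖ ^ 2 := by
    have e : xstar - p = -(y - xstar) + (y - p) := by abel
    rw [e, inner_add_right, inner_neg_right, real_inner_comm (y - p) (y - xstar),
      real_inner_self_eq_norm_sq]
  have key1 : ‖p - xstar‖ ^ 2 ≤ ‖y - xstar‖ ^ 2 := by nlinarith [sq_nonneg ‖y - p‖]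
  -- expand ‖y - xstar‖²
  have hc : ‖y - xstar‖ ^ 2 = ‖x - xstar‖ ^ 2
      - 2 * t * (inner ℝ d (x - xstar) : ℝ) + t ^ 2 * ‖d‖ ^ 2 := by
    have e : y - xstar = (x - xstar) - t • d := by rw [hy]; abel
    rw [e, norm_sub_sq_real, real_inner_smul_right, norm_smul,
      real_inner_comm]
    simp [mul_pow, sq_abs]
    ring
  -- subgradient inequality
  have hsub := hd xstar
  have hinneq : (inner ℝ d (x - xstar) : ℝ) ≥ g x := by
    have e : (inner ℝ d (xstar - x) : ℝ) = -(inner ℝ d (x - xstar) : ℝ) := by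
      have : xstar - x = -(x - xstar) := by abel
      rw [this, inner_neg_right]
    rw [e] at hsub
    linarith
  have hGpos : 0 < g x := lt_trans hε hgx
  have htpos : 0 < t := by positivity
  have htD : t * ‖d‖ ^ 2 = g x := div_mul_cancel₀ _ (ne_of_gt hdsq)
  have key2 : ‖y - xstar‖ ^ 2 ≤ ‖x - xstar‖ ^ 2 - (g x) ^ 2 / ‖d‖ ^ 2 := by
    have htg : t * g x = (g x) ^ 2 / ‖d‖ ^ 2 := by
      rw [ht]; field_simp
    nlinarith [mul_le_mul_of_nonneg_left hinneq (le_of_lt htpos)]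
  have key3 : ε ^ 2 / L ^ 2 < (g x) ^ 2 / ‖d‖ ^ 2 := by
    rw [div_lt_div_iff₀ (by positivity) hdsq]
    have h2 : ε ^ 2 < (g x) ^ 2 := by nlinarith
    have h3 : ‖d‖ ^ 2 ≤ L ^ 2 := by nlinarith
    have h4 : ε ^ 2 * ‖d‖ ^ 2 ≤ ε ^ 2 * L ^ 2 :=
      mul_le_mul_of_nonneg_left h3 (sq_nonneg ε)
    have h5 : ε ^ 2 * L ^ 2 < (g x) ^ 2 * L ^ 2 :=
      mul_lt_mul_of_pos_right h2 (by positivity : (0:ℝ) < L ^ 2)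
    linarith
  calc ‖p - xstar‖ ^ 2 ≤ ‖x - xstar‖ ^ 2 - (g x) ^ 2 / ‖d‖ ^ 2 := le_trans key1 key2
    _ < ‖x - xstar‖ ^ 2 - ε ^ 2 / L ^ 2 := by linarith
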